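/- There exists a unary MA-PFA M that verifies the language UPOWER = { a^(2^i) : i ≥ 0 } with cutpoint 1/2 using certificates of logarithmic length for members: for every i ≥ 0, Acc(i, 2^i) > 1/2, and for every n that is not a power of 2 and every i ≥ 0, Acc(i, n) ≤ 1/2. -/

import Mathlib

open Matrix

/-- A column-stochastic real matrix: nonnegative entries, every column sums to 1. -/
def ColStochastic {m : ℕ} (A : Matrix (Fin m) (Fin m) ℝ) : Prop :=
  (∀ i j, 0 ≤ A i j) ∧ ∀ j, ∑ i, A i j = 1

/-- The first standard basis column vector `e₁`. -/
def e1 (m : ℕ) : Fin m → ℝ := fun j => if j.val = 0 then 1 else 0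

/-- Acceptance probability of a unary MA-PFA with transition matrices
`Ao` (◐), `Aa` (letter a), `Acl` (◑), `Ace` (¢), `Ad` ($) and accepting states `F`,
on certificate `a^i` and input `a^n`. -/
noncomputable def pfaAcc {m : ℕ} (Ao Aa Acl Ace Ad : Matrix (Fin m) (Fin m) ℝ)
    (F : Finset (Fin m)) (i n : ℕ) : ℝ :=
  ∑ j ∈ F, (Ad * Aa ^ n * Ace * Acl * Aa ^ i * Ao).mulVec (e1 m) j

noncomputable section MAPFA

namespace MAPFA

/-- Letter matrix. -/
def Ma : Matrix (Fin 12) (Fin 12) ℝ := Matrix.of fun i j =>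
  if j.val = 0 then (if i.val = 4 then 1 else 0)
  else if j.val = 1 then (if i.val = 1 then 1/16 else if i.val = 4 then 15/16 else 0)
  else if j.val = 2 then (if i.val = 2 then 1/8 else if i.val = 4 then 7/8 else 0)
  else if j.val = 3 then (if i.val = 3 then 1/4 else if i.val = 4 then 3/4 else 0)
  else if j.val = 4 then (if i.val = 4 then 1 else 0)
  else if j.val = 5 then (if i.val = 5 then 1/4 else if i.val = 6 then 1/2 else if i.val = 4 then 1/4 else 0)
  else if j.val = 6 then (if i.val = 6 then 1/4 else if i.val = 4 then 3/4 else 0)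
  else if j.val = 7 then (if i.val = 7 then 1/4 else if i.val = 4 then 3/4 else 0)
  else if j.val = 8 then (if i.val = 8 then 1/4 else if i.val = 4 then 3/4 else 0)
  else if j.val = 9 then (if i.val = 9 then 1/4 else if i.val = 10 then 1/2 else if i.val = 4 then 1/4 else 0)
  else if j.val = 10 then (if i.val = 10 then 1/4 else if i.val = 11 then 1/2 else if i.val = 4 then 1/4 else 0)
  else (if i.val = 11 then 1/4 else if i.val = 4 then 3/4 else 0)

/-- Left certificate marker ◐. -/
def Mo : Matrix (Fin 12) (Fin 12) ℝ := Matrix.of fun i j =>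
  if j.val = 0 then (if i.val = 1 then 1/3 else if i.val = 2 then 1/3 else if i.val = 3 then 1/3 else 0)
  else (if i.val = 4 then 1 else 0)

/-- ¢ marker. -/
def Mc : Matrix (Fin 12) (Fin 12) ℝ := Matrix.of fun i j =>
  if j.val = 1 then (if i.val = 7 then 1/4 else if i.val = 9 then 1/4 else if i.val = 4 then 1/2 else 0)
  else if j.val = 2 then (if i.val = 5 then 1/2 else if i.val = 4 then 1/2 else 0)
  else if j.val = 3 then (if i.val = 8 then 1/2 else if i.val = 4 then 1/2 else 0)
  else (if i.val = 4 then 1 else 0)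

/-- $ marker. -/
def Md : Matrix (Fin 12) (Fin 12) ℝ := Matrix.of fun i j =>
  if j.val = 6 ∨ j.val = 7 then (if i.val = 7 then 1 else 0)
  else if j.val = 8 ∨ j.val = 10 ∨ j.val = 11 then (if i.val = 4 then 1 else 0)
  else (if i.val = 7 then 1/2 else if i.val = 4 then 1/2 else 0)

lemma v0 : ((0:Fin 12):ℕ) = 0 := rfl
lemma v1 : ((1:Fin 12):ℕ) = 1 := rfl
lemma v2 : ((2:Fin 12):ℕ) = 2 := rfl
lemma v3 : ((3:Fin 12):ℕ) = 3 := rfl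
lemma v4 : ((4:Fin 12):ℕ) = 4 := rfl
lemma v5 : ((5:Fin 12):ℕ) = 5 := rfl
lemma v6 : ((6:Fin 12):ℕ) = 6 := rfl
lemma v7 : ((7:Fin 12):ℕ) = 7 := rfl
lemma v8 : ((8:Fin 12):ℕ) = 8 := rfl
lemma v9 : ((9:Fin 12):ℕ) = 9 := rfl
lemma v10 : ((10:Fin 12):ℕ) = 10 := rfl
lemma v11 : ((11:Fin 12):ℕ) = 11 := rfl

lemma fs : ∀ (a : Fin 12), (Fin.succ a).val = a.val + 1 := Fin.val_succ

/-- State after the certificate phase on certificate `a^i`. -/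
def wc (i : ℕ) : Fin 12 → ℝ := fun j =>
  if j.val = 1 then (1/3)*(1/16)^i
  else if j.val = 2 then (1/3)*(1/8)^i
  else if j.val = 3 then (1/3)*(1/4)^i
  else if j.val = 4 then 1 - (1/3)*(1/16)^i - (1/3)*(1/8)^i - (1/3)*(1/4)^i
  else 0

/-- State after reading `a^n` of the input, having routed through ◑ (=1) and ¢. -/
def zv (i n : ℕ) : Fin 12 → ℝ := fun j =>
  if j.val = 5 then (1/6)*(1/8)^i*(1/4)^n
  else if j.val = 6 then 2*((1/6)*(1/8)^i)*(n:ℝ)*(1/4)^n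
  else if j.val = 7 then (1/12)*(1/16)^i*(1/4)^n
  else if j.val = 8 then (1/6)*(1/4)^i*(1/4)^n
  else if j.val = 9 then (1/12)*(1/16)^i*(1/4)^n
  else if j.val = 10 then 2*((1/12)*(1/16)^i)*(n:ℝ)*(1/4)^n
  else if j.val = 11 then 2*((1/12)*(1/16)^i)*(n:ℝ)*((n:ℝ)-1)*(1/4)^n
  else if j.val = 4 then 1 - (1/6)*(1/8)^i*(1/4)^n - 2*((1/6)*(1/8)^i)*(n:ℝ)*(1/4)^n
      - (1/12)*(1/16)^i*(1/4)^n - (1/6)*(1/4)^i*(1/4)^n - (1/12)*(1/16)^i*(1/4)^n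
      - 2*((1/12)*(1/16)^i)*(n:ℝ)*(1/4)^n - 2*((1/12)*(1/16)^i)*(n:ℝ)*((n:ℝ)-1)*(1/4)^n
  else 0


lemma mulVec_apply (M : Matrix (Fin 12) (Fin 12) ℝ) (v : Fin 12 → ℝ) (j : Fin 12) :
    (M *ᵥ v) j = M j 0 * v 0 + M j 1 * v 1 + M j 2 * v 2 + M j 3 * v 3 + M j 4 * v 4 +
      M j 5 * v 5 + M j 6 * v 6 + M j 7 * v 7 + M j 8 * v 8 + M j 9 * v 9 + M j 10 * v 10 +
      M j 11 * v 11 := by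
  simp [Matrix.mulVec, dotProduct, Fin.sum_univ_succ, Fin.succ]
  norm_num [show ((0:Fin 12):ℕ)=0 from rfl, show ((1:Fin 12):ℕ)=1 from rfl,
    show ((2:Fin 12):ℕ)=2 from rfl, show ((3:Fin 12):ℕ)=3 from rfl,
    show ((4:Fin 12):ℕ)=4 from rfl, show ((5:Fin 12):ℕ)=5 from rfl,
    show ((6:Fin 12):ℕ)=6 from rfl, show ((7:Fin 12):ℕ)=7 from rfl,
    show ((8:Fin 12):ℕ)=8 from rfl, show ((9:Fin 12):ℕ)=9 from rfl,
    show ((10:Fin 12):ℕ)=10 from rfl, show ((11:Fin 12):ℕ)=11 from rfl]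
  ring

set_option maxHeartbeats 2000000 in
lemma cert_phase (i : ℕ) : (Ma ^ i) *ᵥ (Mo *ᵥ e1 12) = wc i := by
  induction i with
  | zero =>
      funext j
      rw [pow_zero, Matrix.one_mulVec, mulVec_apply]
      fin_cases j <;>
        norm_num [Mo, wc, e1, Matrix.of_apply, v0, v1, v2, v3, v4, v5, v6, v7, v8, v9, v10, v11]
  | succ i ih =>
      rw [pow_succ', ← Matrix.mulVec_mulVec, ih]
      funext j
      rw [mulVec_apply]
      fin_cases j <;>
        · norm_num [Ma, wc, Matrix.of_apply, v0, v1, v2, v3, v4, v5, v6, v7, v8, v9, v10, v11, pow_succ,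
            -Fin.val_eq_zero_iff]
          try ring


set_option maxHeartbeats 2000000 in
lemma input_phase (i n : ℕ) : (Ma ^ n) *ᵥ (Mc *ᵥ ((1 : Matrix (Fin 12) (Fin 12) ℝ) *ᵥ wc i))
    = zv i n := by
  rw [Matrix.one_mulVec]
  induction n with
  | zero =>
      funext j
      rw [pow_zero, Matrix.one_mulVec, mulVec_apply]
      fin_cases j <;>
        · norm_num [Mc, wc, zv, Matrix.of_apply, v0, v1, v2, v3, v4, v5, v6, v7, v8, v9, v10, v11]
          try ring
  | succ n ih =>
      rw [pow_succ', ← Matrix.mulVec_mulVec, ih]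
      funext j
      rw [mulVec_apply]
      fin_cases j <;>
        · norm_num [Ma, zv, Matrix.of_apply, v0, v1, v2, v3, v4, v5, v6, v7, v8, v9, v10, v11,
            pow_succ]
          try push_cast
          try ring

set_option maxHeartbeats 2000000 in
lemma acc_formula (i n : ℕ) :
    pfaAcc Mo Ma (1 : Matrix (Fin 12) (Fin 12) ℝ) Mc Md {7} i n
      = 1/2 + ((1/4)^n * (1/16)^i / 24) * (1 - 2*((n:ℝ) - 2^i)^2) := by
  unfold pfaAcc
  rw [Finset.sum_singleton]
  have h : (Md * Ma ^ n * Mc * (1 : Matrix (Fin 12) (Fin 12) ℝ) * Ma ^ i * Mo) *ᵥ e1 12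
      = Md *ᵥ zv i n := by
    rw [← Matrix.mulVec_mulVec, ← Matrix.mulVec_mulVec, ← Matrix.mulVec_mulVec,
      ← Matrix.mulVec_mulVec, ← Matrix.mulVec_mulVec, cert_phase, input_phase]
  rw [h, mulVec_apply]
  have h16 : ((1:ℝ)/16)^i = (1/4)^i * (1/4)^i := by
    rw [← mul_pow]; norm_num
  have h8 : ((1:ℝ)/8)^i = (1/2)^i * (1/4)^i := by
    rw [← mul_pow]; norm_num
  have h2 : ((1:ℝ)/2)^i * (2:ℝ)^i = 1 := by
    rw [← mul_pow]; norm_num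
  have h4 : ((1:ℝ)/4)^i * ((2:ℝ)^i * (2:ℝ)^i) = 1 := by
    rw [← mul_pow, ← mul_pow]; norm_num
  norm_num [Md, zv, Matrix.of_apply, v0, v1, v2, v3, v4, v5, v6, v7, v8, v9, v10, v11]
  linear_combination ((1/4:ℝ)^n*(n:ℝ)/6)*h8
    + ((1/4:ℝ)^n*(2:ℝ)^i*(2:ℝ)^i/12 - (1/4:ℝ)^n*(n:ℝ)*(2:ℝ)^i/6)*h16
    + ((1/4:ℝ)^n*(n:ℝ)*(1/4:ℝ)^i*(1/4:ℝ)^i*(2:ℝ)^i/6)*h2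
    + ((1/4:ℝ)^n*(1/4:ℝ)^i/12 - (1/4:ℝ)^n*(n:ℝ)*(1/4:ℝ)^i*(1/2:ℝ)^i/6)*h4

set_option maxHeartbeats 1000000 in
lemma Ma_stoch : ColStochastic Ma := by
  constructor
  · intro i j
    fin_cases j <;>
      · simp only [Ma, Matrix.of_apply]
        norm_num
        try (split_ifs <;> norm_num)
  · intro j; fin_cases j <;>
      · simp only [Ma, Matrix.of_apply, Fin.sum_univ_succ, Finset.sum_empty, Fin.val_succ,
          v0, v1, v2, v3, v4, v5, v6, v7, v8, v9, v10, v11]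
        norm_num

set_option maxHeartbeats 1000000 in
lemma Mo_stoch : ColStochastic Mo := by
  constructor
  · intro i j
    fin_cases j <;>
      · simp only [Mo, Matrix.of_apply]
        norm_num
        try (split_ifs <;> norm_num)
  · intro j; fin_cases j <;>
      · simp only [Mo, Matrix.of_apply, Fin.sum_univ_succ, Finset.sum_empty, Fin.val_succ,
          v0, v1, v2, v3, v4, v5, v6, v7, v8, v9, v10, v11]
        norm_num

set_option maxHeartbeats 1000000 in
lemma Mc_stoch : ColStochastic Mc := by
  constructor
  · intro i j
    fin_cases j <;>
      · simp only [Mc, Matrix.of_apply]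
        norm_num
        try (split_ifs <;> norm_num)
  · intro j; fin_cases j <;>
      · simp only [Mc, Matrix.of_apply, Fin.sum_univ_succ, Finset.sum_empty, Fin.val_succ,
          v0, v1, v2, v3, v4, v5, v6, v7, v8, v9, v10, v11]
        norm_num

set_option maxHeartbeats 1000000 in
lemma Md_stoch : ColStochastic Md := by
  constructor
  · intro i j
    fin_cases j <;>
      · simp only [Md, Matrix.of_apply]
        norm_num
        try (split_ifs <;> norm_num)
  · intro j; fin_cases j <;>
      · simp only [Md, Matrix.of_apply, Fin.sum_univ_succ, Finset.sum_empty, Fin.val_succ,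
          v0, v1, v2, v3, v4, v5, v6, v7, v8, v9, v10, v11]
        norm_num

lemma one_stoch : ColStochastic (1 : Matrix (Fin 12) (Fin 12) ℝ) := by
  constructor
  · intro i j
    by_cases h : i = j <;> simp [Matrix.one_apply, h]
  · intro j
    simp [Matrix.one_apply]

end MAPFA

end MAPFA

/-- some unary MA-PFA verifies `UPOWER = { a^(2^i) }` with cutpoint 1/2,
using certificates of logarithmic length for members. -/
theorem mapfa_upower :
    ∃ (m : ℕ) (Ao Aa Acl Ace Ad : Matrix (Fin m) (Fin m) ℝ) (F : Finset (Fin m)),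
      ColStochastic Ao ∧ ColStochastic Aa ∧ ColStochastic Acl ∧
      ColStochastic Ace ∧ ColStochastic Ad ∧
      (∀ i : ℕ, 1 / 2 < pfaAcc Ao Aa Acl Ace Ad F i (2 ^ i)) ∧
      (∀ n : ℕ, (¬ ∃ i : ℕ, n = 2 ^ i) → ∀ i : ℕ,
        pfaAcc Ao Aa Acl Ace Ad F i n ≤ 1 / 2) := by
  refine ⟨12, MAPFA.Mo, MAPFA.Ma, 1, MAPFA.Mc, MAPFA.Md, {7},
    MAPFA.Mo_stoch, MAPFA.Ma_stoch, MAPFA.one_stoch, MAPFA.Mc_stoch, MAPFA.Md_stoch, ?_, ?_⟩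
  · intro i
    rw [MAPFA.acc_formula]
    have h0 : ((2^i : ℕ):ℝ) - 2^i = 0 := by push_cast; ring
    rw [h0]
    have : (0:ℝ) < (1/4)^(2^i) * (1/16)^i / 24 := by positivity
    nlinarith
  · intro n hn i
    rw [MAPFA.acc_formula]
    have hne : n ≠ 2^i := fun h => hn ⟨i, h⟩
    have h1 : (1:ℝ) ≤ ((n:ℝ) - 2^i)^2 := by
      rcases lt_or_gt_of_ne hne with h | h
      · have h' : (n:ℝ) + 1 ≤ 2^i := by
          have hh := Nat.succ_le_of_lt h
          calc (n:ℝ) + 1 = ((n+1 : ℕ):ℝ) := by push_cast; ring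
          _ ≤ ((2^i : ℕ):ℝ) := by exact_mod_cast hh
          _ = 2^i := by push_cast; ring
        nlinarith
      · have h' : (2:ℝ)^i + 1 ≤ n := by
          have hh := Nat.succ_le_of_lt h
          calc (2:ℝ)^i + 1 = ((2^i + 1 : ℕ):ℝ) := by push_cast; ring
          _ ≤ ((n : ℕ):ℝ) := by exact_mod_cast hh
        nlinarith
    have hC : (0:ℝ) ≤ (1/4)^n * (1/16)^i / 24 := by positivity
    nlinarith
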